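/- arXiv:2602.04686 — 2 statements merged into one kernel-verified Lean document; each statement's English description precedes it below -/
import Mathlib

section
/- If Φ(t) = t ln(1+t), then its Young conjugate satisfies Φ*(t) ≍ cosh(t) − 1, i.e., there exist constants c, C > 0 with c(cosh t − 1) ≤ Φ*(t) ≤ C(cosh t − 1) for all t ≥ 0. -/
open Real ENNReal

/-- The Young conjugate of `Φ(s) = s ln(1+s)`, as an `ℝ≥0∞`-valued supremum. -/
noncomputable def conjLogPhi (t : ℝ) : ℝ≥0∞ :=
  ⨆ (s : ℝ) (_ : 0 ≤ s), ENNReal.ofReal (s * t - s * Real.log (1 + s))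

lemma key_upper (s t : ℝ) (hs : 0 ≤ s) :
    s * t - s * Real.log (1 + s) ≤ Real.exp t - t - 1 := by
  have h1 : (0:ℝ) < 1 + s := by linarith
  set L := Real.log (1 + s) with hLdef
  have hL : L ≤ s := by
    have := Real.log_le_sub_one_of_pos h1; linarith
  have h2 : 1 + (t - L) ≤ Real.exp (t - L) := by linarith [Real.add_one_le_exp (t - L)]
  have h3 : Real.exp (t - L) = Real.exp t / (1 + s) := by
    rw [Real.exp_sub, hLdef, Real.exp_log h1]
  rw [h3] at h2
  have h4 : (1 + (t - L)) * (1 + s) ≤ Real.exp t := (le_div_iff₀ h1).mp h2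
  nlinarith [hs, hL]

/-- If `Φ(t) = t ln(1+t)`, then `Φ*(t) ≍ cosh(t) − 1`. -/
theorem conj_tlog_asymp_cosh :
    ∃ c C : ℝ, 0 < c ∧ 0 < C ∧ ∀ t : ℝ, 0 ≤ t →
      ENNReal.ofReal (c * (Real.cosh t - 1)) ≤ conjLogPhi t ∧
      conjLogPhi t ≤ ENNReal.ofReal (C * (Real.cosh t - 1)) := by
  refine ⟨Real.exp (-4) / 2, 2, by positivity, by norm_num, fun t ht => ?_⟩
  have hcosh : Real.cosh t = (Real.exp t + Real.exp (-t)) / 2 := Real.cosh_eq t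
  constructor
  · -- lower bound
    rcases le_or_gt t 2 with ht2 | ht2
    · -- small case: use s = t/2
      have hs : (0:ℝ) ≤ t / 2 := by linarith
      have hlog : Real.log (1 + t / 2) ≤ t / 2 := by
        have := Real.log_le_sub_one_of_pos (show (0:ℝ) < 1 + t/2 by linarith); linarith
      have hval : t ^ 2 / 4 ≤ (t/2) * t - (t/2) * Real.log (1 + t/2) := by
        nlinarith [mul_le_mul_of_nonneg_left hlog hs]
      -- cosh t - 1 ≤ t^2 * exp 4 / 2
      have he1 : Real.exp t - 1 ≤ t * Real.exp t := by
        have h := Real.add_one_le_exp (-t)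
        have hp := Real.exp_pos t
        have hm : Real.exp (-t) * Real.exp t = 1 := by
          rw [← Real.exp_add]; norm_num
        nlinarith
      have hexple : Real.exp t ≤ Real.exp 2 := Real.exp_le_exp.mpr ht2
      have hent : Real.exp (-t) ≤ 1 := Real.exp_le_one_iff.mpr (by linarith)
      have hm : Real.exp (-t) * Real.exp t = 1 := by
        rw [← Real.exp_add]; norm_num
      have hm2 : Real.exp (-t) * Real.exp t ^ 2 = Real.exp t := by
        rw [sq, ← mul_assoc, hm, one_mul]
      have hcb : Real.cosh t - 1 ≤ t ^ 2 * Real.exp 4 / 2 := by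
        have h1 : 2 * Real.cosh t - 2 ≤ (Real.exp t - 1) ^ 2 := by
          rw [hcosh]
          nlinarith [mul_le_mul_of_nonneg_right hent (sq_nonneg (Real.exp t - 1)), hm, hm2]
        have h2 : (Real.exp t - 1) ^ 2 ≤ (t * Real.exp t) ^ 2 := by
          have hnn : 0 ≤ Real.exp t - 1 := by nlinarith [Real.add_one_le_exp t]
          exact pow_le_pow_left₀ hnn he1 2
        have h3 : (t * Real.exp t) ^ 2 ≤ t ^ 2 * Real.exp 4 := by
          have : Real.exp t ^ 2 ≤ Real.exp 4 := by
            rw [← Real.exp_nat_mul]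
            exact Real.exp_le_exp.mpr (by norm_num; linarith)
          nlinarith [sq_nonneg t, Real.exp_pos t]
        nlinarith
      have hfin : Real.exp (-4) / 2 * (Real.cosh t - 1) ≤ t ^ 2 / 4 := by
        have hm4 : Real.exp (-4) * Real.exp 4 = 1 := by
          rw [← Real.exp_add]; norm_num
        have hp4 : (0:ℝ) < Real.exp (-4) := Real.exp_pos _
        nlinarith [mul_le_mul_of_nonneg_left hcb (le_of_lt hp4)]
      calc ENNReal.ofReal (Real.exp (-4) / 2 * (Real.cosh t - 1))
          ≤ ENNReal.ofReal ((t/2) * t - (t/2) * Real.log (1 + t/2)) :=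
            ENNReal.ofReal_le_ofReal (by linarith)
        _ ≤ conjLogPhi t := le_iSup₂_of_le (t/2) hs le_rfl
    · -- large case : use s = exp (t-1) - 1
      set s₀ := Real.exp (t - 1) - 1 with hs₀def
      have hs₀ : 0 ≤ s₀ := by
        have : (1:ℝ) ≤ Real.exp (t - 1) := Real.one_le_exp (by linarith)
        simp [hs₀def]; linarith
      have h1s : 1 + s₀ = Real.exp (t - 1) := by simp [hs₀def]
      have hval : s₀ * t - s₀ * Real.log (1 + s₀) = s₀ := by
        rw [h1s, Real.log_exp]; ring
      have hfin : Real.exp (-4) / 2 * (Real.cosh t - 1) ≤ s₀ := by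
        have hent : Real.exp (-t) ≤ 1 := Real.exp_le_one_iff.mpr (by linarith)
        have hcb : Real.cosh t - 1 ≤ Real.exp t / 2 := by
          rw [hcosh]; linarith
        have hm : Real.exp (-4) * Real.exp t = Real.exp (t - 4) := by
          rw [← Real.exp_add]; ring_nf
        have h2' : Real.exp (t - 4) ≤ Real.exp (t - 1) := Real.exp_le_exp.mpr (by linarith)
        have h3' : (2:ℝ) ≤ Real.exp (t - 1) := by
          calc (2:ℝ) ≤ Real.exp 1 := by
                have := Real.add_one_le_exp (1:ℝ); linarith
            _ ≤ Real.exp (t - 1) := Real.exp_le_exp.mpr (by linarith)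
        have hp4 : (0:ℝ) < Real.exp (-4) := Real.exp_pos _
        have : Real.exp (-4) / 2 * (Real.cosh t - 1) ≤ Real.exp (t - 4) / 4 := by
          nlinarith [mul_le_mul_of_nonneg_left hcb (le_of_lt hp4)]
        have : Real.exp (t - 4) / 4 ≤ s₀ := by
          simp only [hs₀def]; nlinarith
        linarith [mul_le_mul_of_nonneg_left hcb (le_of_lt hp4)]
      calc ENNReal.ofReal (Real.exp (-4) / 2 * (Real.cosh t - 1))
          ≤ ENNReal.ofReal (s₀ * t - s₀ * Real.log (1 + s₀)) :=
            ENNReal.ofReal_le_ofReal (by rw [hval]; exact hfin)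
        _ ≤ conjLogPhi t := le_iSup₂_of_le s₀ hs₀ le_rfl
  · -- upper bound
    refine iSup₂_le fun s hs => ENNReal.ofReal_le_ofReal ?_
    have h1 := key_upper s t hs
    have h2 : Real.exp t - t - 1 ≤ 2 * (Real.cosh t - 1) := by
      have := Real.add_one_le_exp (-t)
      rw [hcosh]; linarith
    linarith
end

section
/- If Φ(t) = cosh(t) − 1, then its Young conjugate satisfies Φ*(t) ≍ t ln(1+t), i.e., there exist constants c, C > 0 with c · t ln(1+t) ≤ Φ*(t) ≤ C · t ln(1+t) for all t ≥ 0. -/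
open Real ENNReal

/-- The Young conjugate of `Φ(s) = cosh(s) − 1`, as an `ℝ≥0∞`-valued supremum. -/
noncomputable def conjCoshPhi (t : ℝ) : ℝ≥0∞ :=
  ⨆ (s : ℝ) (_ : 0 ≤ s), ENNReal.ofReal (s * t - (Real.cosh s - 1))

lemma sinh_le_mul_cosh {u : ℝ} (hu : 0 ≤ u) : Real.sinh u ≤ u * Real.cosh u := by
  have h : ∀ v ∈ Set.Ici (0:ℝ), 0 ≤ deriv (fun w => w * Real.cosh w - Real.sinh w) v := by
    intro v hv
    have : deriv (fun w => w * Real.cosh w - Real.sinh w) v = v * Real.sinh v := by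
      have h1 : HasDerivAt (fun w => w * Real.cosh w - Real.sinh w)
          (1 * Real.cosh v + v * Real.sinh v - Real.cosh v) v :=
        ((hasDerivAt_id v).mul (Real.hasDerivAt_cosh v)).sub (Real.hasDerivAt_sinh v)
      rw [h1.deriv]; ring
    rw [this]
    exact mul_nonneg hv (Real.sinh_nonneg_iff.mpr hv)
  have hmono : MonotoneOn (fun w => w * Real.cosh w - Real.sinh w) (Set.Ici (0:ℝ)) := by
    apply monotoneOn_of_deriv_nonneg (convex_Ici 0)
    · exact (Continuous.sub (continuous_id.mul Real.continuous_cosh)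
        Real.continuous_sinh).continuousOn
    · intro v hv
      exact ((hasDerivAt_id v).mul (Real.hasDerivAt_cosh v)).sub
        (Real.hasDerivAt_sinh v) |>.differentiableAt.differentiableWithinAt
    · intro v hv
      exact h v (interior_subset hv)
  have := hmono (Set.self_mem_Ici) (Set.mem_Ici.mpr hu) hu
  simp at this
  linarith

lemma cosh_sub_one_le {s : ℝ} (hs : 0 ≤ s) : Real.cosh s - 1 ≤ s * Real.sinh s / 2 := by
  have hu : 0 ≤ s / 2 := by linarith
  have h1 : Real.cosh s = Real.cosh (s/2) ^ 2 + Real.sinh (s/2) ^ 2 := by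
    rw [← Real.cosh_two_mul]; ring_nf
  have h2 : Real.sinh s = 2 * Real.sinh (s/2) * Real.cosh (s/2) := by
    rw [← Real.sinh_two_mul]; ring_nf
  have h3 := sinh_le_mul_cosh hu
  have h4 : Real.cosh (s/2) ^ 2 = Real.sinh (s/2) ^ 2 + 1 := Real.cosh_sq (s/2)
  have h5 : 0 ≤ Real.sinh (s/2) := Real.sinh_nonneg_iff.mpr hu
  nlinarith

/-- maximum of `s * t - (cosh s - 1)` over `s` is at `s₀` with `sinh s₀ = t`. -/
lemma key_max {s s₀ : ℝ} (h0 : 0 ≤ s₀) :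
    s * Real.sinh s₀ - (Real.cosh s - 1) ≤ s₀ * Real.sinh s₀ - (Real.cosh s₀ - 1) := by
  set d := s - s₀ with hd
  have hadd : Real.cosh s = Real.cosh s₀ * Real.cosh d + Real.sinh s₀ * Real.sinh d := by
    rw [show s = s₀ + d by simp [hd], Real.cosh_add]
  have h1 : 1 ≤ Real.cosh d := Real.one_le_cosh d
  have h2 : Real.cosh s₀ - Real.sinh s₀ = Real.exp (-s₀) := Real.cosh_sub_sinh s₀
  have h2' : 0 ≤ Real.cosh s₀ - Real.sinh s₀ := by rw [h2]; positivity
  have h3 : 0 ≤ Real.sinh s₀ := Real.sinh_nonneg_iff.mpr h0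
  have h4 : Real.cosh d + Real.sinh d = Real.exp d := Real.cosh_add_sinh d
  have h5 : d + 1 ≤ Real.exp d := Real.add_one_le_exp d
  nlinarith [mul_nonneg h3 (by linarith : (0:ℝ) ≤ Real.exp d - (d + 1)),
    mul_nonneg h2' (by linarith : (0:ℝ) ≤ Real.cosh d - 1)]

/-- If `Φ(t) = cosh(t) − 1`, then `Φ*(t) ≍ t ln(1+t)`. -/
theorem conj_cosh_asymp_tlog :
    ∃ c C : ℝ, 0 < c ∧ 0 < C ∧ ∀ t : ℝ, 0 ≤ t →
      ENNReal.ofReal (c * (t * Real.log (1 + t))) ≤ conjCoshPhi t ∧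
      conjCoshPhi t ≤ ENNReal.ofReal (C * (t * Real.log (1 + t))) := by
  refine ⟨1/2, 2, by norm_num, by norm_num, fun t ht => ?_⟩
  set s₀ := Real.arsinh t with hs₀def
  have hsinh : Real.sinh s₀ = t := Real.sinh_arsinh t
  have h0 : 0 ≤ s₀ := Real.arsinh_nonneg_iff.mpr ht
  have hsqrt : (1:ℝ) ≤ Real.sqrt (1 + t ^ 2) := by
    have := Real.sqrt_le_sqrt (show (1:ℝ) ≤ 1 + t^2 by nlinarith)
    simpa using this
  have hsqrt2 : Real.sqrt (1 + t ^ 2) ≤ 1 + t := by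
    rw [show (1:ℝ) + t = Real.sqrt ((1+t)^2) by rw [Real.sqrt_sq (by linarith)]]
    exact Real.sqrt_le_sqrt (by nlinarith)
  have hlog_le : Real.log (1 + t) ≤ s₀ := by
    rw [hs₀def, Real.arsinh]
    exact Real.log_le_log (by linarith) (by linarith)
  have hs₀_le : s₀ ≤ 2 * Real.log (1 + t) := by
    rw [hs₀def, Real.arsinh]
    calc Real.log (t + Real.sqrt (1 + t ^ 2)) ≤ Real.log ((1+t)^2) := by
          apply Real.log_le_log (by positivity)
          nlinarith
      _ = 2 * Real.log (1 + t) := by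
          rw [Real.log_pow]; push_cast; ring
  have hlog0 : 0 ≤ Real.log (1 + t) := Real.log_nonneg (by linarith)
  constructor
  · -- lower bound
    have hle : conjCoshPhi t ≥ ENNReal.ofReal (s₀ * t - (Real.cosh s₀ - 1)) := by
      exact le_iSup₂ (f := fun s (_ : 0 ≤ s) =>
        ENNReal.ofReal (s * t - (Real.cosh s - 1))) s₀ h0
    refine le_trans (ENNReal.ofReal_le_ofReal ?_) hle
    have hc := cosh_sub_one_le h0
    rw [hsinh] at hc
    nlinarith [mul_le_mul_of_nonneg_right hlog_le ht]
  · -- upper bound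
    refine iSup₂_le fun s hs => ENNReal.ofReal_le_ofReal ?_
    have hk := key_max (s := s) h0
    rw [hsinh] at hk
    have hcosh := Real.one_le_cosh s₀
    nlinarith [mul_le_mul_of_nonneg_right hs₀_le ht]
end
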